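/- For every δ ∈ (0, 1/8), K ≥ 0 and c₁ > 0, there exists t₀ > 0 such that for all t ≥ t₀ the following holds. Set r := √t. For every measurable function u : (0,∞) → [0,∞) satisfying u(y) ≤ c₁ (y + log r) r^{−3/2} e^{−√2 y − y²/(2r)} for all y > 0, and for every x ≤ −√t/δ, one has (e^{√2(x+K)} / √(2π(t−r))) · ∫₀^∞ u(y) e^{√2 y} e^{−(y+x+K)²/(2(t−r))} 1_{|y+x+K| ≤ √t/(3δ)} dy ≤ c₁ e^{√2 K} e^{√2 x − x²/(16 r)}. -/
import Mathlib
set_option maxHeartbeats 1000000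


open Real MeasureTheory

/-- Bound on the truncated ψ-function `ψ_≤(r,t,x)` from the proof of Lemma 3.6 (bd-L):
with `r = √t`, for any measurable `u : (0,∞) → [0,∞)` dominated by the sharp tail
estimate `u(y) ≤ c₁ (y + log r) r^{−3/2} e^{−√2 y − y²/(2r)}`, and any `x ≤ −√t/δ`,
the truncated integral is at most `c₁ e^{√2 K} e^{√2 x − x²/(16 r)}`. -/
theorem psi_le_bound (δ K c₁ : ℝ) (hδ : δ ∈ Set.Ioo (0 : ℝ) (1 / 8)) (hK : 0 ≤ K)
    (hc₁ : 0 < c₁) :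
    ∃ t₀ > (0 : ℝ), ∀ t ≥ t₀,
      ∀ u : ℝ → ℝ, Measurable u → (∀ y, 0 < y → 0 ≤ u y) →
        (∀ y, 0 < y →
          u y ≤ c₁ * (y + Real.log (Real.sqrt t)) * (Real.sqrt t) ^ (-(3 / 2) : ℝ) *
            Real.exp (-(Real.sqrt 2 * y) - y ^ 2 / (2 * Real.sqrt t))) →
        ∀ x : ℝ, x ≤ -(Real.sqrt t / δ) →
          (Real.exp (Real.sqrt 2 * (x + K)) /
              Real.sqrt (2 * Real.pi * (t - Real.sqrt t))) *
            ∫ y in Set.Ioi (0 : ℝ),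
              u y * Real.exp (Real.sqrt 2 * y) *
                Real.exp (-(y + x + K) ^ 2 / (2 * (t - Real.sqrt t))) *
                (if |y + x + K| ≤ Real.sqrt t / (3 * δ) then (1 : ℝ) else 0)
            ≤ c₁ * Real.exp (Real.sqrt 2 * K) *
                Real.exp (Real.sqrt 2 * x - x ^ 2 / (16 * Real.sqrt t)) := by
  obtain ⟨hδ0, hδ8⟩ := hδ
  refine ⟨100 + 36 * K ^ 2, by positivity, ?_⟩
  intro t ht u hu hu0 hub x hx
  have hK2 : (0:ℝ) ≤ 36 * K ^ 2 := by positivity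
  have ht100 : (100 : ℝ) ≤ t := by linarith
  have ht0 : (0:ℝ) < t := by linarith
  set r := Real.sqrt t with hrdef
  have hr0 : 0 < r := Real.sqrt_pos.mpr ht0
  have hrr : r * r = t := Real.mul_self_sqrt ht0.le
  have hr10 : (10:ℝ) ≤ r := by nlinarith
  have hrK : 6 * K ≤ r := by nlinarith
  have hrt : r ≤ t / 10 := by nlinarith
  have htr : (90:ℝ) ≤ t - r := by linarith
  have htr0 : (0:ℝ) < t - r := by linarith
  -- facts about x
  have hx' : x * δ ≤ -r := by
    rw [show -(r/δ) = -r/δ from by ring] at hx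
    exact (le_div_iff₀ hδ0).mp hx
  have hx0 : x < 0 := by nlinarith
  have hx8 : 8 * r ≤ -x := by nlinarith [mul_nonneg (by linarith : (0:ℝ) ≤ -x) (by linarith : (0:ℝ) ≤ 1/8 - δ)]
  have hKx : K ≤ -x / 48 := by linarith
  -- the dominating function
  set E := Real.exp (-x ^ 2 / (16 * r)) with hEdef
  have hE0 : 0 < E := Real.exp_pos _
  set C := 4 * c₁ * E with hCdef
  have hC0 : 0 < C := by positivity
  -- pointwise bound
  have key : ∀ y : ℝ, y ∈ Set.Ioi (0:ℝ) →
      u y * Real.exp (Real.sqrt 2 * y) *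
        Real.exp (-(y + x + K) ^ 2 / (2 * (t - r))) *
        (if |y + x + K| ≤ r / (3 * δ) then (1 : ℝ) else 0)
      ≤ C * Real.exp (-(2⁻¹) * y) := by
    intro y hy
    rw [Set.mem_Ioi] at hy
    by_cases hind : |y + x + K| ≤ r / (3 * δ)
    · rw [if_pos hind, mul_one]
      have hge : -(r / (3 * δ)) ≤ y + x + K := (abs_le.mp hind).1
      have hdiv : r / (3 * δ) ≤ -x / 3 := by
        rw [div_le_div_iff₀ (by positivity) (by norm_num)]
        nlinarith
      have hy1 : -x / 2 ≤ y := by linarith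
      have hy2 : 4 * r ≤ y := by linarith
      have hlog : Real.log r ≤ y := le_trans (Real.log_le_sub_one_of_pos hr0) (by linarith)
      have hrpow : r ^ (-(3 / 2) : ℝ) ≤ 1 :=
        Real.rpow_le_one_of_one_le_of_nonpos (by linarith) (by norm_num)
      have hG : Real.exp (-(y + x + K) ^ 2 / (2 * (t - r))) ≤ 1 := by
        rw [Real.exp_le_one_iff]
        exact div_nonpos_of_nonpos_of_nonneg (neg_nonpos.mpr (sq_nonneg _)) (by positivity)
      have e1 : u y * Real.exp (Real.sqrt 2 * y) ≤ c₁ * (2 * y) * Real.exp (-(y ^ 2 / (2 * r))) := by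
        calc u y * Real.exp (Real.sqrt 2 * y)
            ≤ (c₁ * (y + Real.log r) * r ^ (-(3 / 2) : ℝ) *
                Real.exp (-(Real.sqrt 2 * y) - y ^ 2 / (2 * r))) * Real.exp (Real.sqrt 2 * y) := by
              exact mul_le_mul_of_nonneg_right (hub y hy) (Real.exp_nonneg _)
          _ = c₁ * (y + Real.log r) * r ^ (-(3 / 2) : ℝ) * Real.exp (-(y ^ 2 / (2 * r))) := by
              rw [mul_assoc, ← Real.exp_add]; ring_nf
          _ ≤ c₁ * (2 * y) * 1 * Real.exp (-(y ^ 2 / (2 * r))) := by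
              gcongr
              · linarith
          _ = c₁ * (2 * y) * Real.exp (-(y ^ 2 / (2 * r))) := by ring
      have e2 : Real.exp (-(y ^ 2 / (2 * r))) ≤ E * Real.exp (-y) := by
        rw [hEdef, ← Real.exp_add, Real.exp_le_exp, ← sub_nonneg]
        have h2 : (0:ℝ) ≤ 8 * y ^ 2 - x ^ 2 - 16 * r * y := by
          nlinarith [mul_nonneg (by linarith : (0:ℝ) ≤ 2 * y + x) (by linarith : (0:ℝ) ≤ 2 * y - x),
            mul_nonneg (by linarith : (0:ℝ) ≤ y - 4 * r) hy.le]
        have h3 : -x ^ 2 / (16 * r) + -y - -(y ^ 2 / (2 * r)) =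
            (8 * y ^ 2 - x ^ 2 - 16 * r * y) / (16 * r) := by
          field_simp; ring
        rw [h3]
        exact div_nonneg h2 (by positivity)
      have e3 : y * Real.exp (-y) ≤ 2 * Real.exp (-(2⁻¹) * y) := by
        have h4 : y ≤ 2 * Real.exp (2⁻¹ * y) := by
          nlinarith [Real.add_one_le_exp (2⁻¹ * y)]
        calc y * Real.exp (-y) ≤ (2 * Real.exp (2⁻¹ * y)) * Real.exp (-y) :=
              mul_le_mul_of_nonneg_right h4 (Real.exp_nonneg _)
          _ = 2 * Real.exp (-(2⁻¹) * y) := by rw [mul_assoc, ← Real.exp_add]; ring_nf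
      calc u y * Real.exp (Real.sqrt 2 * y) * Real.exp (-(y + x + K) ^ 2 / (2 * (t - r)))
          ≤ (c₁ * (2 * y) * Real.exp (-(y ^ 2 / (2 * r)))) * 1 := by
            apply mul_le_mul e1 hG (Real.exp_nonneg _)
            positivity
        _ = c₁ * (2 * y) * Real.exp (-(y ^ 2 / (2 * r))) := by ring
        _ ≤ c₁ * (2 * y) * (E * Real.exp (-y)) := by gcongr
        _ = 2 * c₁ * E * (y * Real.exp (-y)) := by ring
        _ ≤ 2 * c₁ * E * (2 * Real.exp (-(2⁻¹) * y)) := by gcongr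
        _ = C * Real.exp (-(2⁻¹) * y) := by rw [hCdef]; ring
    · rw [if_neg hind, mul_zero]
      positivity
  -- integral bound
  have hgi : IntegrableOn (fun y => C * Real.exp (-(2⁻¹) * y)) (Set.Ioi (0:ℝ)) :=
    (exp_neg_integrableOn_Ioi 0 (by norm_num : (0:ℝ) < 2⁻¹)).const_mul C
  have hf0 : ∀ y : ℝ, y ∈ Set.Ioi (0:ℝ) → 0 ≤
      u y * Real.exp (Real.sqrt 2 * y) *
        Real.exp (-(y + x + K) ^ 2 / (2 * (t - r))) *
        (if |y + x + K| ≤ r / (3 * δ) then (1 : ℝ) else 0) := by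
    intro y hy
    rw [Set.mem_Ioi] at hy
    have := hu0 y hy
    split_ifs <;> positivity
  have hint : (∫ y in Set.Ioi (0:ℝ), Real.exp (-(2⁻¹) * y)) = 2 := by
    have h := integral_comp_mul_right_Ioi (fun z => Real.exp (-z)) 0 (by norm_num : (0:ℝ) < 2⁻¹)
    simp only [zero_mul, integral_exp_neg_Ioi_zero, smul_eq_mul, mul_one] at h
    rw [show (fun y => Real.exp (-(2⁻¹) * y)) = fun y => Real.exp (-(y * 2⁻¹)) from by ext y; ring_nf]
    rw [h]; norm_num
  have hI : (∫ y in Set.Ioi (0 : ℝ),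
      u y * Real.exp (Real.sqrt 2 * y) *
        Real.exp (-(y + x + K) ^ 2 / (2 * (t - r))) *
        (if |y + x + K| ≤ r / (3 * δ) then (1 : ℝ) else 0)) ≤ C * 2 := by
    have h1 := integral_mono_of_nonneg
      (Filter.eventually_of_mem (self_mem_ae_restrict measurableSet_Ioi) hf0)
      hgi
      (Filter.eventually_of_mem (self_mem_ae_restrict measurableSet_Ioi) key)
    rwa [integral_const_mul, hint] at h1
  -- final step
  have hS : (8:ℝ) ≤ Real.sqrt (2 * Real.pi * (t - r)) := by
    rw [show (8:ℝ) = Real.sqrt 64 from by rw [show (64:ℝ) = 8^2 by norm_num, Real.sqrt_sq (by norm_num)]]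
    apply Real.sqrt_le_sqrt
    nlinarith [Real.pi_gt_three]
  have hS0 : (0:ℝ) < Real.sqrt (2 * Real.pi * (t - r)) := by linarith
  have hA0 : (0:ℝ) ≤ Real.exp (Real.sqrt 2 * (x + K)) / Real.sqrt (2 * Real.pi * (t - r)) := by
    positivity
  calc (Real.exp (Real.sqrt 2 * (x + K)) / Real.sqrt (2 * Real.pi * (t - r))) *
        ∫ y in Set.Ioi (0 : ℝ),
          u y * Real.exp (Real.sqrt 2 * y) *
            Real.exp (-(y + x + K) ^ 2 / (2 * (t - r))) *
            (if |y + x + K| ≤ r / (3 * δ) then (1 : ℝ) else 0)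
      ≤ (Real.exp (Real.sqrt 2 * (x + K)) / Real.sqrt (2 * Real.pi * (t - r))) * (C * 2) :=
        mul_le_mul_of_nonneg_left hI hA0
    _ = (8 / Real.sqrt (2 * Real.pi * (t - r))) * (c₁ * (Real.exp (Real.sqrt 2 * (x + K)) * E)) := by
        rw [hCdef]; ring
    _ ≤ 1 * (c₁ * (Real.exp (Real.sqrt 2 * (x + K)) * E)) :=
        mul_le_mul_of_nonneg_right (by rw [div_le_one hS0]; exact hS) (by positivity)
    _ = c₁ * Real.exp (Real.sqrt 2 * K) * Real.exp (Real.sqrt 2 * x - x ^ 2 / (16 * r)) := by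
        rw [one_mul, hEdef, ← Real.exp_add, mul_assoc, ← Real.exp_add]
        congr 1
        ring
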